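/- arXiv:1604.00622 — 3 statements merged into one kernel-verified Lean document; each statement's English description precedes it below -/
import Mathlib

section
/- For all nonnegative integers l and m, B_m^{(-l)} = B_l^{(-m)}, where B_n^{(k)} are the poly-Bernoulli numbers. -/
open PowerSeries Finset

/-- Unsigned Stirling numbers of the first kind. -/
def stirling1 : ℕ → ℕ → ℕ
  | 0, 0 => 1
  | 0, _ + 1 => 0
  | _ + 1, 0 => 0
  | n + 1, m + 1 => stirling1 n m + n * stirling1 n (m + 1)

/-- Stirling numbers of the second kind. -/
def stirling2 : ℕ → ℕ → ℕ
  | 0, 0 => 1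
  | 0, _ + 1 => 0
  | _ + 1, 0 => 0
  | n + 1, m + 1 => stirling2 n m + (m + 1) * stirling2 n (m + 1)

/-- e^t as a formal power series over ℚ. -/
noncomputable def expQ : PowerSeries ℚ := PowerSeries.exp ℚ

/-- e^{-t} as a formal power series over ℚ. -/
noncomputable def expNegQ : PowerSeries ℚ := rescale (-1) expQ

/-- The formal power series Li_k(1-e^{-t})/(1-e^{-t}) = ∑_{m≥0} (m+1)^{-k} (1-e^{-t})^m,
  defined coefficientwise (the tail vanishes since (1-e^{-t})^m has order m). -/
noncomputable def liEGF (k : ℤ) : PowerSeries ℚ :=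
  PowerSeries.mk fun j =>
    ∑ m ∈ range (j + 1), ((m : ℚ) + 1) ^ (-k) * coeff j ((1 - expNegQ) ^ m)

/-- EGF of the poly-Bernoulli polynomials: e^{-xt} Li_k(1-e^{-t})/(1-e^{-t}). -/
noncomputable def pbEGF (k : ℤ) (x : ℚ) : PowerSeries ℚ := rescale (-x) expQ * liEGF k

/-- Poly-Bernoulli polynomial value B_m^{(k)}(x). -/
noncomputable def pbPoly (k : ℤ) (x : ℚ) (m : ℕ) : ℚ := m.factorial * coeff m (pbEGF k x)

/-- Poly-Bernoulli number B_m^{(k)}. -/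
noncomputable def pbB (k : ℤ) (m : ℕ) : ℚ := pbPoly k 0 m

/-- Poly-Bernoulli number C_m^{(k)}. -/
noncomputable def pbC (k : ℤ) (m : ℕ) : ℚ := pbPoly k 1 m

/-- 𝓑_m^{(-l)}(n) = ∑_{j=0}^n [n j] B_m^{(-l-j)}(n). -/
noncomputable def scrB (l m n : ℕ) : ℚ :=
  ∑ j ∈ range (n + 1), (stirling1 n j : ℚ) * pbPoly (-(l : ℤ) - j) n m

lemma stirling2_zz : stirling2 0 0 = 1 := rfl

lemma stirling2_succ (n p : ℕ) : stirling2 (n+1) (p+1) = stirling2 n p + (p+1) * stirling2 n (p+1) := rfl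

lemma stirling2_zero (n : ℕ) : stirling2 (n+1) 0 = 0 := rfl

lemma stirling2_eq_zero : ∀ (n p : ℕ), n < p → stirling2 n p = 0
  | 0, _+1, _ => rfl
  | n+1, p+1, h => by
    rw [stirling2_succ, stirling2_eq_zero n p (by omega), stirling2_eq_zero n (p+1) (by omega)]
    simp

lemma stirling2_succ_one (n : ℕ) : stirling2 (n+1) 1 = 1 := by
  induction n with
  | zero => rfl
  | succ n ih => rw [stirling2_succ, stirling2_zero, ih]

lemma stirling2_sum (n p : ℕ) :
    stirling2 (n+1) (p+1) = ∑ k ∈ range (n+1), n.choose k * stirling2 k p := by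
  induction n generalizing p with
  | zero => simp [stirling2_succ, stirling2_eq_zero 0 (p+1) (by omega)]
  | succ n ih =>
    rw [sum_range_succ']
    have h1 : ∀ k ∈ range (n+1), (n+1).choose (k+1) * stirling2 (k+1) p
        = n.choose k * stirling2 (k+1) p + n.choose (k+1) * stirling2 (k+1) p := by
      intro k _; rw [Nat.choose_succ_succ, add_mul]
    rw [sum_congr rfl h1, sum_add_distrib]
    have h2 : stirling2 0 p + ∑ k ∈ range (n+1), n.choose (k+1) * stirling2 (k+1) p
        = stirling2 (n+1) (p+1) := by
      rw [sum_range_succ, Nat.choose_succ_self, ih, sum_range_succ']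
      simp [add_comm]
    have h3 : ∑ k ∈ range (n+1), n.choose k * stirling2 (k+1) p
        = stirling2 (n+1) p + p * stirling2 (n+1) (p+1) := by
      cases p with
      | zero => simp [stirling2_zero]
      | succ r =>
        have : ∀ k ∈ range (n+1), n.choose k * stirling2 (k+1) (r+1)
            = n.choose k * stirling2 k r + (r+1) * (n.choose k * stirling2 k (r+1)) := by
          intro k _; rw [stirling2_succ]; ring
        rw [sum_congr rfl this, sum_add_distrib, ← mul_sum, ← ih, ← ih]
    rw [stirling2_succ (n+1) p, h3]
    have h4 : (p+1) * stirling2 (n+1) (p+1) = p * stirling2 (n+1) (p+1) + stirling2 (n+1) (p+1) := by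
      ring
    simp only [Nat.choose_zero_right, one_mul]
    omega

lemma sum_choose_stirling2 (n p : ℕ) :
    ∑ k ∈ range n, n.choose k * stirling2 k p = (p+1) * stirling2 n (p+1) := by
  have h := stirling2_sum n p
  rw [sum_range_succ, Nat.choose_self, one_mul] at h
  cases n with
  | zero => simpa [stirling2_eq_zero 0 (p+1) (by omega)] using h
  | succ n =>
    rw [stirling2_succ] at h
    omega

lemma coeff_expNegQ (n : ℕ) : coeff n expNegQ = (-1)^n / n.factorial := by
  simp [expNegQ, expQ, coeff_rescale, coeff_exp]
  rw [div_eq_mul_inv]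

lemma coeff_f (n : ℕ) :
    coeff n (1 - expNegQ) = if n = 0 then (0:ℚ) else -((-1:ℚ)^n / (n.factorial:ℚ)) := by
  rw [map_sub, coeff_expNegQ, coeff_one]
  split <;> simp_all

lemma stirling2_zero_iff (n : ℕ) : (stirling2 n 0 : ℚ) = if n = 0 then 1 else 0 := by
  cases n with
  | zero => simp [stirling2_zz]
  | succ n => simp [stirling2_zero]

lemma coeff_pow_f (p : ℕ) : ∀ n : ℕ, coeff n ((1 - expNegQ)^p)
    = (-1:ℚ)^(n+p) * p.factorial * stirling2 n p / n.factorial := by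
  induction p with
  | zero =>
    intro n
    rw [pow_zero, coeff_one, stirling2_zero_iff]
    split <;> simp_all
  | succ p ih =>
    intro n
    rw [pow_succ, coeff_mul, Finset.Nat.sum_antidiagonal_eq_sum_range_succ_mk]
    rw [sum_range_succ]
    have last : coeff (n - n) (1 - expNegQ) = 0 := by
      rw [Nat.sub_self, coeff_f]; simp
    rw [last, mul_zero, add_zero]
    have key : ∀ k ∈ range n, coeff k ((1 - expNegQ)^p) * coeff (n-k) (1 - expNegQ)
        = (-1)^(n+(p+1)) * p.factorial / n.factorial * ((n.choose k : ℚ) * stirling2 k p) := by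
      intro k hk
      rw [mem_range] at hk
      rw [ih, coeff_f, if_neg (by omega)]
      have h1 : (-1:ℚ)^k * (-1)^(n-k) = (-1)^n := by
        rw [← pow_add, Nat.add_sub_cancel' hk.le]
      have h2 : (n.choose k : ℚ) = n.factorial / (k.factorial * (n-k).factorial) :=
        Nat.cast_choose ℚ hk.le
      have hn : (n.factorial : ℚ) ≠ 0 := Nat.cast_ne_zero.mpr (Nat.factorial_ne_zero n)
      have hk' : (k.factorial : ℚ) ≠ 0 := Nat.cast_ne_zero.mpr (Nat.factorial_ne_zero k)
      have hnk : ((n-k).factorial : ℚ) ≠ 0 := Nat.cast_ne_zero.mpr (Nat.factorial_ne_zero _)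
      rw [h2]
      field_simp
      ring_nf
      rw [← h1]
      ring
    rw [sum_congr rfl key, ← mul_sum]
    have := sum_choose_stirling2 n p
    have h3 : ∑ k ∈ range n, (n.choose k : ℚ) * stirling2 k p
        = (p+1) * stirling2 n (p+1) := by
      exact_mod_cast congrArg (Nat.cast : ℕ → ℚ) this
    rw [h3, Nat.factorial_succ]
    push_cast
    ring

lemma pbB_neg_eq (l m : ℕ) :
    pbB (-(l:ℤ)) m = ∑ p ∈ range (m+1),
      (-1:ℚ)^(m+p) * p.factorial * stirling2 m p * ((p:ℚ)+1)^l := by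
  unfold pbB pbPoly pbEGF
  rw [neg_zero, rescale_zero]
  have h0 : (C (R := ℚ)).comp constantCoeff expQ = 1 := by
    simp [expQ]
  rw [RingHom.comp_apply] at h0 ⊢
  rw [h0, one_mul]
  unfold liEGF
  rw [coeff_mk, mul_sum]
  refine sum_congr rfl fun p hp => ?_
  rw [coeff_pow_f, neg_neg, zpow_natCast]
  have hm : (m.factorial : ℚ) ≠ 0 := Nat.cast_ne_zero.mpr (Nat.factorial_ne_zero m)
  field_simp

lemma choose_id1 (p j : ℕ) :
    ((p:ℚ)+1) * p.choose j = ((j:ℚ)+1) * p.choose j + ((j:ℚ)+1) * p.choose (j+1) := by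
  rcases le_or_gt j p with h | h
  · have := Nat.choose_succ_right_eq p j
    have hc : (p.choose (j+1) : ℚ) * ((j:ℚ)+1) = (p.choose j : ℚ) * ((p:ℚ) - j) := by
      have := congrArg (Nat.cast : ℕ → ℚ) this
      push_cast [Nat.cast_sub h] at this
      linarith [this]
    linarith [hc]
  · rw [Nat.choose_eq_zero_of_lt h, Nat.choose_eq_zero_of_lt (by omega)]
    simp

-- (q+1)*C(q+1,j) = j*C(q+1,j) + (q+1)*C(q,j)  in ℚ

lemma choose_id2 (q j : ℕ) :
    ((q:ℚ)+1) * (q+1).choose j = (j:ℚ) * (q+1).choose j + ((q:ℚ)+1) * q.choose j := by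
  rcases le_or_gt j (q+1) with h | h
  · have := Nat.choose_mul_succ_eq q j
    have hc : (q.choose j : ℚ) * ((q:ℚ)+1) = ((q+1).choose j : ℚ) * ((q:ℚ)+1-j) := by
      have := congrArg (Nat.cast : ℕ → ℚ) this
      push_cast [Nat.cast_sub h] at this
      linarith [this]
    linarith [hc]
  · rw [Nat.choose_eq_zero_of_lt h, Nat.choose_eq_zero_of_lt (by omega)]
    simp

lemma I2 (l : ℕ) : ∀ p : ℕ, ((p:ℚ)+1)^l
    = ∑ j ∈ range (p+1), (p.choose j : ℚ) * j.factorial * stirling2 (l+1) (j+1) := by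
  induction l with
  | zero =>
    intro p
    rw [pow_zero, sum_eq_single_of_mem 0 (mem_range.mpr (by omega))]
    · simp [stirling2_succ_one 0]
    · intro j _ hj
      obtain ⟨r, rfl⟩ := Nat.exists_eq_succ_of_ne_zero hj
      rw [stirling2_eq_zero 1 (r+2) (by omega)]
      simp
  | succ l ih =>
    intro p
    rw [pow_succ, ih p, sum_mul]
    have step : ∀ j ∈ range (p+1),
        (p.choose j : ℚ) * j.factorial * stirling2 (l+1) (j+1) * ((p:ℚ)+1)
        = ((j:ℚ)+1) * p.choose j * j.factorial * stirling2 (l+1) (j+1)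
          + (((j+1).factorial:ℚ) * p.choose (j+1) * stirling2 (l+1) (j+1)) := by
      intro j _
      have h2 : (p.choose j:ℚ) * j.factorial * stirling2 (l+1) (j+1) * ((p:ℚ)+1)
          = (((p:ℚ)+1) * p.choose j) * ((j.factorial:ℚ) * stirling2 (l+1) (j+1)) := by ring
      rw [h2, choose_id1 p j, Nat.factorial_succ]
      push_cast
      ring
    rw [sum_congr rfl step, sum_add_distrib]
    -- reindex the second sum
    have reindex : ∑ j ∈ range (p+1), ((j+1).factorial:ℚ) * p.choose (j+1) * stirling2 (l+1) (j+1)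
        = ∑ j ∈ range (p+1), (j.factorial:ℚ) * p.choose j * stirling2 (l+1) j := by
      have e1 := sum_range_succ' (fun j => (j.factorial:ℚ) * p.choose j * stirling2 (l+1) j) (p+1)
      have e2 := sum_range_succ (fun j => (j.factorial:ℚ) * p.choose j * stirling2 (l+1) j) (p+1)
      simp only [Nat.choose_succ_self, stirling2_zero l, Nat.cast_zero, Nat.cast_ofNat,
        mul_zero, zero_mul, add_zero] at e1 e2
      rw [e2] at e1
      simpa using e1.symm
    rw [reindex, ← sum_add_distrib]
    refine sum_congr rfl fun j _ => ?_
    rw [stirling2_succ (l+1) j]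
    push_cast
    ring

lemma I3 (m : ℕ) : ∀ j : ℕ,
    ∑ p ∈ range (m+1), (-1:ℚ)^(m+p) * p.factorial * stirling2 m p * p.choose j
      = (j.factorial:ℚ) * stirling2 (m+1) (j+1) := by
  induction m with
  | zero =>
    intro j
    rw [sum_range_one]
    cases j with
    | zero => simp [stirling2_zz, stirling2_succ_one 0]
    | succ r =>
      rw [stirling2_eq_zero 1 (r+2) (by omega), Nat.choose_eq_zero_of_lt (by omega)]
      simp
  | succ m ih =>
    intro j
    rw [sum_range_succ']
    have f0 : (-1:ℚ)^(m+1+0) * ((Nat.factorial 0 : ℕ):ℚ) * (stirling2 (m+1) 0 : ℚ)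
        * (((0:ℕ).choose j : ℕ):ℚ) = 0 := by
      rw [stirling2_zero]; simp
    rw [f0, add_zero]
    have tsplit : ∀ q ∈ range (m+1),
        (-1:ℚ)^(m+1+(q+1)) * (((q+1).factorial : ℕ):ℚ) * (stirling2 (m+1) (q+1) : ℚ)
            * (((q+1).choose j : ℕ):ℚ)
        = ((j:ℚ) * ((-1:ℚ)^(m+q) * q.factorial * stirling2 m q * ((q+1).choose j))
            + ((q:ℚ)+1) * ((-1:ℚ)^(m+q) * q.factorial * stirling2 m q * (q.choose j)))
          - (-1:ℚ)^(m+(q+1)) * (((q+1).factorial : ℕ):ℚ) * ((q:ℚ)+1) * stirling2 m (q+1)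
            * ((q+1).choose j) := by
      intro q _
      have hpow : (-1:ℚ)^(m+1+(q+1)) = (-1:ℚ)^(m+q) := by
        rw [show m+1+(q+1) = (m+q)+2 by ring, pow_add]; ring
      have hpow2 : (-1:ℚ)^(m+(q+1)) = -(-1:ℚ)^(m+q) := by
        rw [show m+(q+1) = (m+q)+1 by ring, pow_succ]; ring
      rw [hpow, hpow2, stirling2_succ m q]
      have hc := choose_id2 q j
      push_cast [Nat.factorial_succ]
      linear_combination ((-1:ℚ)^(m+q) * (q.factorial:ℚ) * (stirling2 m q : ℚ)
        * (1:ℚ)) * hc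
    rw [sum_congr rfl tsplit, sum_sub_distrib, sum_add_distrib]
    have gshift : ∑ q ∈ range (m+1), (-1:ℚ)^(m+(q+1)) * (((q+1).factorial : ℕ):ℚ) * ((q:ℚ)+1)
          * stirling2 m (q+1) * ((q+1).choose j)
        = ∑ p ∈ range (m+1), (-1:ℚ)^(m+p) * (p.factorial:ℚ) * (p:ℚ) * stirling2 m p
          * (p.choose j) := by
      have e1 := sum_range_succ' (fun p => (-1:ℚ)^(m+p) * (p.factorial:ℚ) * (p:ℚ)
        * (stirling2 m p : ℚ) * ((p.choose j : ℕ):ℚ)) (m+1)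
      have e2 := sum_range_succ (fun p => (-1:ℚ)^(m+p) * (p.factorial:ℚ) * (p:ℚ)
        * (stirling2 m p : ℚ) * ((p.choose j : ℕ):ℚ)) (m+1)
      rw [stirling2_eq_zero m (m+1) (by omega)] at e2
      simp only [Nat.cast_zero, mul_zero, zero_mul, add_zero, Nat.cast_ofNat] at e1 e2
      rw [e2] at e1
      refine Eq.trans ?_ e1.symm
      refine sum_congr rfl fun q _ => ?_
      push_cast
      ring
    rw [gshift]
    have hcomb : ∑ q ∈ range (m+1), ((q:ℚ)+1) * ((-1:ℚ)^(m+q) * q.factorial * stirling2 m q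
          * (q.choose j))
        - ∑ p ∈ range (m+1), (-1:ℚ)^(m+p) * (p.factorial:ℚ) * (p:ℚ) * stirling2 m p
          * (p.choose j)
        = (j.factorial:ℚ) * stirling2 (m+1) (j+1) := by
      rw [← sum_sub_distrib, ← ih j]
      refine sum_congr rfl fun q _ => ?_
      ring
    cases j with
    | zero =>
      simp only [Nat.cast_zero, zero_mul, sum_const_zero, zero_add]
      rw [hcomb]
      rw [stirling2_succ (m+1) 0, stirling2_zero]
      simp
    | succ r =>
      have hW : ∑ q ∈ range (m+1), (-1:ℚ)^(m+q) * q.factorial * stirling2 m q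
            * ((q+1).choose (r+1))
          = (r.factorial:ℚ) * stirling2 (m+1) (r+1) + ((r+1).factorial:ℚ)
            * stirling2 (m+1) (r+2) := by
        rw [← ih r, ← ih (r+1), ← sum_add_distrib]
        refine sum_congr rfl fun q _ => ?_
        rw [Nat.choose_succ_succ q r]
        push_cast
        ring
      rw [add_sub_assoc, hcomb, ← mul_sum, hW, stirling2_succ (m+1) (r+1)]
      push_cast [Nat.factorial_succ]
      ring

lemma pbB_symmform (l m : ℕ) : pbB (-(l:ℤ)) m
    = ∑ j ∈ range (m+1), (j.factorial:ℚ) * j.factorial * stirling2 (l+1) (j+1)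
      * stirling2 (m+1) (j+1) := by
  rw [pbB_neg_eq]
  have step1 : ∀ p ∈ range (m+1),
      (-1:ℚ)^(m+p) * p.factorial * stirling2 m p * ((p:ℚ)+1)^l
      = ∑ j ∈ range (m+1), (-1:ℚ)^(m+p) * p.factorial * stirling2 m p * (p.choose j)
        * ((j.factorial:ℚ) * stirling2 (l+1) (j+1)) := by
    intro p hp
    rw [mem_range] at hp
    have hext : ((p:ℚ)+1)^l
        = ∑ j ∈ range (m+1), (p.choose j : ℚ) * j.factorial * stirling2 (l+1) (j+1) := by
      rw [I2 l p]
      refine sum_subset (fun x hx => mem_range.mpr (by rw [mem_range] at hx; omega)) ?_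
      intro j hj hnj
      rw [mem_range] at hj
      rw [mem_range, not_lt] at hnj
      rw [Nat.choose_eq_zero_of_lt (by omega)]
      simp
    rw [hext, mul_sum]
    refine sum_congr rfl fun j _ => ?_
    ring
  rw [sum_congr rfl step1, sum_comm]
  refine sum_congr rfl fun j _ => ?_
  rw [← sum_mul, I3 m j]
  ring

/-- Duality for poly-Bernoulli numbers: B_m^{(-l)} = B_l^{(-m)}. -/
theorem polyBernoulli_duality (l m : ℕ) : pbB (-(l : ℤ)) m = pbB (-(m : ℤ)) l := by
  rw [pbB_symmform l m, pbB_symmform m l]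
  have h1 : ∑ j ∈ range (m+1), (j.factorial:ℚ) * j.factorial * stirling2 (l+1) (j+1)
        * stirling2 (m+1) (j+1)
      = ∑ j ∈ range (l+m+1), (j.factorial:ℚ) * j.factorial * stirling2 (l+1) (j+1)
        * stirling2 (m+1) (j+1) := by
    refine sum_subset (fun x hx => mem_range.mpr (by rw [mem_range] at hx; omega)) ?_
    intro j hj hnj
    rw [mem_range, not_lt] at hnj
    rw [stirling2_eq_zero (m+1) (j+1) (by omega)]
    simp
  have h2 : ∑ j ∈ range (l+1), (j.factorial:ℚ) * j.factorial * stirling2 (m+1) (j+1)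
        * stirling2 (l+1) (j+1)
      = ∑ j ∈ range (l+m+1), (j.factorial:ℚ) * j.factorial * stirling2 (m+1) (j+1)
        * stirling2 (l+1) (j+1) := by
    refine sum_subset (fun x hx => mem_range.mpr (by rw [mem_range] at hx; omega)) ?_
    intro j hj hnj
    rw [mem_range, not_lt] at hnj
    rw [stirling2_eq_zero (l+1) (j+1) (by omega)]
    simp
  rw [h1, h2]
  exact sum_congr rfl fun j _ => by ring
end

section
/- For nonnegative integers n, r with r \ge n, the exponential generating function identity e^{nt}(e^t-1)^{r-n}/(r-n)! = \sum_{m\ge 0} (\sum_{i=0}^{n} (-1)^{n-i} [n choose_1 i] {m+i choose_2 r}) t^m/m! holds, where [· ·] denotes unsigned Stirling numbers of the first kind and {· ·} Stirling numbers of the second kind. -/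
open PowerSeries Finset

lemma psDerivExp : d⁄dX ℚ (exp ℚ) = exp ℚ := by
  ext m
  rw [coeff_derivative, coeff_exp, coeff_exp]
  simp [Nat.factorial_succ]
  field_simp

lemma psDerivExpPow (n : ℕ) : d⁄dX ℚ (exp ℚ ^ n) = (n : ℚ⟦X⟧) * exp ℚ ^ n := by
  cases n with
  | zero => simp
  | succ n =>
    rw [Derivation.leibniz_pow, psDerivExp, Nat.add_sub_cancel, smul_eq_mul,
      nsmul_eq_mul, ← pow_succ]

lemma psDerivEm1Pow (k : ℕ) :
    d⁄dX ℚ ((exp ℚ - 1) ^ (k + 1)) = ((k : ℚ⟦X⟧) + 1) * ((exp ℚ - 1) ^ k * exp ℚ) := by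
  have hD : d⁄dX ℚ (exp ℚ - 1) = exp ℚ := by
    rw [map_sub, psDerivExp, Derivation.map_one_eq_zero, sub_zero]
  rw [Derivation.leibniz_pow, hD, Nat.add_sub_cancel, smul_eq_mul, nsmul_eq_mul]
  push_cast; ring

lemma odeZero (c : ℚ) (Y : ℚ⟦X⟧) (hd : d⁄dX ℚ Y = c • Y)
    (h0 : constantCoeff Y = 0) : Y = 0 := by
  have key : ∀ m, coeff m Y = 0 := by
    intro m
    induction m with
    | zero => rw [coeff_zero_eq_constantCoeff]; exact h0
    | succ m ih =>
      have h := congrArg (coeff m) hd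
      rw [coeff_derivative, map_smul, smul_eq_mul, ih, mul_zero] at h
      have hne : ((m : ℚ) + 1) ≠ 0 := by positivity
      rcases mul_eq_zero.mp h with h' | h'
      · exact h'
      · exact absurd h' hne
  ext m; simp [key m]

lemma odeEq (c : ℚ) (K F G : ℚ⟦X⟧) (hF : d⁄dX ℚ F = c • F + K)
    (hG : d⁄dX ℚ G = c • G + K)
    (h0 : constantCoeff F = constantCoeff G) : F = G := by
  have := odeZero c (F - G) (by rw [map_sub, hF, hG, smul_sub]; ring)
    (by rw [map_sub, h0, sub_self])
  exact sub_eq_zero.mp this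

lemma egf_stirling2 (r : ℕ) :
    ((r.factorial : ℚ))⁻¹ • (exp ℚ - 1) ^ r =
      PowerSeries.mk fun m => (stirling2 m r : ℚ) / m.factorial := by
  induction r with
  | zero =>
    ext m
    cases m with
    | zero => simp [stirling2]
    | succ m => simp [stirling2]
  | succ r ih =>
    apply odeEq ((r : ℚ) + 1) (PowerSeries.mk fun m => (stirling2 m r : ℚ) / m.factorial)
    · rw [Derivation.map_smul, psDerivEm1Pow, ← ih]
      have hc : ((r : ℚ⟦X⟧) + 1) = C ((r : ℚ) + 1) := by rw [map_add, map_one, map_natCast]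
      rw [hc, ← smul_eq_C_mul]
      nth_rewrite 2 [show exp ℚ = (exp ℚ - 1) + 1 from by ring]
      rw [mul_add, mul_one, ← pow_succ]
      match_scalars
      all_goals push_cast [Nat.factorial_succ]
      all_goals field_simp
    · ext m
      rw [coeff_derivative, coeff_mk, map_add, LinearMap.map_smul, coeff_mk, coeff_mk]
      have h2 : (stirling2 (m + 1) (r + 1) : ℚ)
          = stirling2 m r + ((r : ℚ) + 1) * stirling2 m (r + 1) := by
        rw [show stirling2 (m + 1) (r + 1) = stirling2 m r + (r + 1) * stirling2 m (r + 1)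
          from rfl]
        push_cast; ring
      rw [h2]
      have : ((m : ℚ) + 1) ≠ 0 := by positivity
      have hmf : ((m.factorial : ℚ)) ≠ 0 := Nat.cast_ne_zero.mpr m.factorial_ne_zero
      rw [Nat.factorial_succ]; push_cast
      rw [smul_eq_mul]
      field_simp
      ring
    · simp [constantCoeff_exp, stirling2]

lemma stirling1_eq_zero : ∀ {n k : ℕ}, n < k → stirling1 n k = 0 := by
  intro n
  induction n with
  | zero =>
    intro k hk
    match k, hk with
    | k + 1, _ => rfl
  | succ n ih =>
    intro k hk
    match k, hk with
    | k + 1, hk =>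
      show stirling1 n k + n * stirling1 n (k + 1) = 0
      rw [ih (by omega), ih (by omega), mul_zero, add_zero]

lemma crec (r n m : ℕ) :
    ∑ i ∈ range (n + 1 + 1),
        (-1 : ℚ) ^ (n + 1 - i) * (stirling1 (n + 1) i : ℚ) * (stirling2 (m + i) r : ℚ)
      = (∑ i ∈ range (n + 1),
          (-1 : ℚ) ^ (n - i) * (stirling1 n i : ℚ) * (stirling2 (m + 1 + i) r : ℚ))
        - (n : ℚ) * ∑ i ∈ range (n + 1),
            (-1 : ℚ) ^ (n - i) * (stirling1 n i : ℚ) * (stirling2 (m + i) r : ℚ) := by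
  rw [Finset.sum_range_succ' _ (n + 1)]
  have h0 : (-1 : ℚ) ^ (n + 1 - 0) * (stirling1 (n + 1) 0 : ℚ) * (stirling2 (m + 0) r : ℚ)
      = 0 := by
    rw [show stirling1 (n + 1) 0 = 0 from rfl]; push_cast; ring
  rw [h0, add_zero]
  have hterm : ∀ i ∈ range (n + 1),
      (-1 : ℚ) ^ (n + 1 - (i + 1)) * (stirling1 (n + 1) (i + 1) : ℚ)
          * (stirling2 (m + (i + 1)) r : ℚ)
      = (-1 : ℚ) ^ (n - i) * (stirling1 n i : ℚ) * (stirling2 (m + 1 + i) r : ℚ)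
        + (n : ℚ) * ((-1 : ℚ) ^ (n - i) * (stirling1 n (i + 1) : ℚ)
            * (stirling2 (m + 1 + i) r : ℚ)) := by
    intro i hi
    rw [show n + 1 - (i + 1) = n - i from by omega,
      show m + (i + 1) = m + 1 + i from by omega,
      show stirling1 (n + 1) (i + 1) = stirling1 n i + n * stirling1 n (i + 1) from rfl]
    push_cast; ring
  rw [Finset.sum_congr rfl hterm, Finset.sum_add_distrib, ← Finset.mul_sum]
  rcases Nat.eq_zero_or_pos n with hn | hn
  · subst hn; simp
  · have hB : ∑ i ∈ range (n + 1),
        (-1 : ℚ) ^ (n - i) * (stirling1 n (i + 1) : ℚ) * (stirling2 (m + 1 + i) r : ℚ)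
        = - ∑ i ∈ range (n + 1),
            (-1 : ℚ) ^ (n - i) * (stirling1 n i : ℚ) * (stirling2 (m + i) r : ℚ) := by
      rw [Finset.sum_range_succ]
      rw [stirling1_eq_zero (by omega : n < n + 1)]
      push_cast
      rw [mul_zero, zero_mul, add_zero]
      rw [Finset.sum_range_succ' _ n]
      rw [show stirling1 n 0 = 0 from by
        match n, hn with
        | k + 1, _ => rfl]
      push_cast
      rw [mul_zero, zero_mul, add_zero, ← Finset.sum_neg_distrib]
      apply Finset.sum_congr rfl
      intro i hi
      simp only [mem_range] at hi
      rw [show n - i = (n - (i + 1)) + 1 from by omega,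
        show m + (i + 1) = m + 1 + i from by omega]
      ring
    rw [hB]; ring

lemma stepL (n k : ℕ) :
    ((k.factorial : ℚ))⁻¹ • (exp ℚ ^ (n + 1) * (exp ℚ - 1) ^ k) =
      d⁄dX ℚ (((k + 1).factorial : ℚ)⁻¹ • (exp ℚ ^ n * (exp ℚ - 1) ^ (k + 1)))
        - (n : ℚ) • (((k + 1).factorial : ℚ)⁻¹ • (exp ℚ ^ n * (exp ℚ - 1) ^ (k + 1))) := by
  rw [Derivation.map_smul, Derivation.leibniz, psDerivEm1Pow, psDerivExpPow]
  have hc1 : ((k : ℚ⟦X⟧) + 1) = C ((k : ℚ) + 1) := by rw [map_add, map_one, map_natCast]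
  have hc2 : ((n : ℚ⟦X⟧)) = C (n : ℚ) := (map_natCast C n).symm
  have hC : C (((k + 1).factorial : ℚ))⁻¹ * C ((k : ℚ) + 1)
      = C ((k.factorial : ℚ))⁻¹ := by
    rw [← map_mul]
    congr 1
    rw [Nat.factorial_succ]
    have h1 : ((k.factorial : ℚ)) ≠ 0 := Nat.cast_ne_zero.mpr k.factorial_ne_zero
    have h2 : ((k : ℚ) + 1) ≠ 0 := by positivity
    push_cast
    field_simp
  rw [hc1, hc2]
  simp only [smul_eq_C_mul, smul_eq_mul]
  linear_combination (-(exp ℚ ^ (n + 1) * (exp ℚ - 1) ^ k)) * hC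

lemma takeda_aux (n : ℕ) : ∀ r : ℕ, n ≤ r →
    ((r - n).factorial : ℚ)⁻¹ •
        ((PowerSeries.exp ℚ) ^ n * (PowerSeries.exp ℚ - 1) ^ (r - n)) =
      PowerSeries.mk fun m =>
        (∑ i ∈ range (n + 1),
          (-1 : ℚ) ^ (n - i) * (stirling1 n i : ℚ) * (stirling2 (m + i) r : ℚ)) /
          m.factorial := by
  induction n with
  | zero =>
    intro r h
    simp only [Nat.sub_zero, pow_zero, one_mul]
    rw [egf_stirling2 r]
    ext m
    rw [coeff_mk, coeff_mk, Finset.sum_range_one, Nat.add_zero,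
      show stirling1 0 0 = 1 from rfl]
    norm_num
  | succ n ih =>
    intro r h
    have hk : r - n = (r - (n + 1)) + 1 := by omega
    rw [stepL n (r - (n + 1)), ← hk, ih r (by omega)]
    ext m
    rw [map_sub, coeff_derivative, LinearMap.map_smul, coeff_mk, coeff_mk, coeff_mk]
    rw [crec r n m]
    have hm : ((m : ℚ) + 1) ≠ 0 := by positivity
    have hmf : ((m.factorial : ℚ)) ≠ 0 := Nat.cast_ne_zero.mpr m.factorial_ne_zero
    rw [Nat.factorial_succ]; push_cast
    rw [smul_eq_mul]
    field_simp

/-- e^{nt}(e^t-1)^{r-n}/(r-n)! = ∑_m (∑_{i=0}^n (-1)^{n-i} [n,i] {m+i,r}) t^m/m!. -/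
theorem takeda_first (n r : ℕ) (h : n ≤ r) :
    ((r - n).factorial : ℚ)⁻¹ •
        ((PowerSeries.exp ℚ) ^ n * (PowerSeries.exp ℚ - 1) ^ (r - n)) =
      PowerSeries.mk fun m =>
        (∑ i ∈ range (n + 1),
          (-1 : ℚ) ^ (n - i) * (stirling1 n i : ℚ) * (stirling2 (m + i) r : ℚ)) /
          m.factorial := by
  exact takeda_aux n r h
end

section
/- For all nonnegative integers l, m, n: \sum_{j=0}^{n} [n choose_1 j] B_m^{(-l-j)}(n) = \sum_{j=0}^{n} [n choose_1 j] B_l^{(-m-j)}(n), a one-parameter generalization of the poly-Bernoulli duality formula. -/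
open PowerSeries Finset

noncomputable def gq (x : ℚ) (m p : ℕ) : ℚ :=
  ∑ q ∈ range (p + 1), (-1) ^ (q + m) * (p.choose q : ℚ) * (x + q) ^ m

lemma gq_zero (m : ℕ) : ∀ (x : ℚ) (p : ℕ), m < p → gq x m p = 0 := by
  induction m with
  | zero =>
    intro x p hp
    have h := add_pow (-1 : ℚ) 1 p
    simp only [one_pow, mul_one, neg_add_cancel] at h
    rw [zero_pow (by omega : p ≠ 0)] at h
    simp only [gq, pow_zero, mul_one, Nat.add_zero]
    exact h.symm
  | succ m ih =>
    intro x p hp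
    obtain ⟨p', rfl⟩ : ∃ p', p = p' + 1 := ⟨p - 1, by omega⟩
    have expand : ∀ q ∈ range (p' + 2),
        (-1) ^ (q + (m+1)) * ((p'+1).choose q : ℚ) * (x + q) ^ (m+1)
        = (-x) * ((-1) ^ (q + m) * ((p'+1).choose q : ℚ) * (x + q) ^ m)
          + (-1) ^ (q + (m+1)) * (q * ((p'+1).choose q : ℚ)) * (x + q) ^ m := by
      intro q _
      rw [pow_succ (x + (q:ℚ)) m, pow_add, pow_add, pow_add]
      ring
    have step1 : gq x (m+1) (p'+1) = (-x) * gq x m (p'+1)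
        + ∑ q ∈ range (p' + 2), (-1) ^ (q + (m+1)) * (q * ((p'+1).choose q : ℚ)) * (x + q) ^ m := by
      rw [gq, sum_congr rfl expand, sum_add_distrib, ← mul_sum]; rfl
    rw [step1, ih x (p'+1) (by omega), mul_zero, zero_add]
    have reix : ∑ q ∈ range (p' + 2), (-1) ^ (q + (m+1)) * (q * ((p'+1).choose q : ℚ)) * (x + q) ^ m
        = ∑ q ∈ range (p' + 1), (-1) ^ (q + m) * ((p'+1) * (p'.choose q : ℚ)) * ((x+1) + q) ^ m := by
      rw [Finset.sum_range_succ' (fun q => (-1) ^ (q + (m+1)) * (q * ((p'+1).choose q : ℚ)) * (x + q) ^ m) (p'+1)]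
      simp only [Nat.cast_zero, zero_mul, mul_zero, zero_mul, add_zero]
      apply sum_congr rfl
      intro q _
      have hnat : (p'+1) * p'.choose q = (p'+1).choose (q+1) * (q+1) := Nat.add_one_mul_choose_eq p' q
      have hc : ((p'+1):ℚ) * (p'.choose q : ℚ) = ((p'+1).choose (q+1) : ℚ) * ((q:ℚ)+1) := by
        exact_mod_cast congrArg (Nat.cast : ℕ → ℚ) hnat
      have hsgn : ((-1:ℚ))^(q+1+(m+1)) = (-1)^(q+m) := by
        rw [show q+1+(m+1) = (q+m)+2 by omega, pow_add]; norm_num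
      push_cast
      rw [hsgn, show x + ((q:ℚ)+1) = x+1+q by ring, hc]
      ring
    rw [reix]
    have : ∑ q ∈ range (p' + 1), (-1) ^ (q + m) * ((p'+1) * (p'.choose q : ℚ)) * ((x+1) + q) ^ m
        = (p'+1) * gq (x+1) m p' := by
      rw [gq, mul_sum]; apply sum_congr rfl; intro q _; ring
    rw [this, ih (x+1) p' (by omega), mul_zero]

lemma gq_I1_zero (x : ℚ) (m : ℕ) : gq x (m+1) 0 = -x * gq x m 0 := by
  simp [gq, pow_succ, pow_add]
  ring

lemma gq_I1 (x : ℚ) (m p : ℕ) :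
    gq x (m+1) (p+1) = ((p:ℚ)+1) * gq x m p - (x + ((p:ℚ)+1)) * gq x m (p+1) := by
  have pad : ∑ q ∈ range (p+2), (-1)^(q+m) * (p.choose q : ℚ) * (x+(q:ℚ))^m = gq x m p := by
    rw [Finset.sum_range_succ (fun q => (-1)^(q+m) * (p.choose q : ℚ) * (x+(q:ℚ))^m) (p+1),
      Nat.choose_succ_self]
    simp [gq]
  rw [← pad]
  simp only [gq, mul_sum, ← sum_sub_distrib]
  apply sum_congr rfl
  intro q hq
  have hq' : q ≤ p + 1 := Nat.lt_succ_iff.mp (mem_range.mp hq)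
  have hnat := Nat.choose_mul_succ_eq p q
  have hc : (p.choose q : ℚ) * ((p:ℚ)+1) = ((p+1).choose q : ℚ) * (((p:ℚ)+1) - q) := by
    have h2 : ((p.choose q * (p+1) : ℕ) : ℚ) = (((p+1).choose q * (p+1-q) : ℕ) : ℚ) := by
      exact_mod_cast congrArg (Nat.cast : ℕ → ℚ) hnat
    push_cast [Nat.cast_sub hq'] at h2
    exact h2
  linear_combination (-(-1:ℚ)^(q+m) * (x+q)^m) * hc

lemma key_reindex (x : ℚ) (m p : ℕ) :
    ∑ q ∈ range (p+1), (-1)^(q+m) * (p.choose q : ℚ) * ((p:ℚ)-q) * (x+q)^m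
    = -∑ q ∈ range (p+1), (-1)^(q+m) * (q:ℚ) * (p.choose q : ℚ) * ((x-1)+q)^m := by
  rw [Finset.sum_range_succ (fun q => (-1)^(q+m) * (p.choose q : ℚ) * ((p:ℚ)-(q:ℚ)) * (x+q)^m) p]
  rw [Finset.sum_range_succ' (fun q => (-1)^(q+m) * (q:ℚ) * (p.choose q : ℚ) * ((x-1)+q)^m) p]
  simp only [sub_self, mul_zero, zero_mul, add_zero, Nat.cast_zero]
  rw [← sum_neg_distrib]
  apply sum_congr rfl
  intro q hq
  have hq' : q < p := mem_range.mp hq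
  have hnat := Nat.choose_succ_right_eq p q
  have hc : (p.choose (q+1) : ℚ) * ((q:ℚ)+1) = (p.choose q : ℚ) * ((p:ℚ) - q) := by
    have h2 : ((p.choose (q+1) * (q+1) : ℕ) : ℚ) = ((p.choose q * (p-q) : ℕ) : ℚ) := by
      exact_mod_cast congrArg (Nat.cast : ℕ → ℚ) hnat
    push_cast [Nat.cast_sub (le_of_lt hq')] at h2
    exact h2
  push_cast
  linear_combination (-(-1:ℚ)^(q+m) * (x+q)^m) * hc

lemma gq_I2 (x : ℚ) (m p : ℕ) :
    ((p:ℚ)+1) * gq x m p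
    = (∑ i ∈ range (m+1), (m.choose i : ℚ) * (gq x (i+1) p + x * gq x i p))
      - gq x (m+1) p - (x-1) * gq x m p := by
  have S1 : ∑ i ∈ range (m+1), (m.choose i : ℚ) * (gq x (i+1) p + x * gq x i p)
      = -∑ q ∈ range (p+1), (-1)^(q+m) * (q:ℚ) * (p.choose q : ℚ) * ((x-1)+q)^m := by
    simp only [gq, mul_add, mul_sum, ← sum_add_distrib]
    rw [Finset.sum_comm, ← sum_neg_distrib]
    refine sum_congr rfl fun q _ => ?_
    have binexp : ∑ i ∈ range (m+1), (m.choose i : ℚ) * (-(x+(q:ℚ)))^i = (1 - (x+(q:ℚ)))^m := by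
      have h := add_pow (-(x+(q:ℚ))) 1 m
      simp only [one_pow, mul_one] at h
      rw [show (-(x+(q:ℚ)) + 1) = 1 - (x+(q:ℚ)) by ring] at h
      rw [h]
      exact sum_congr rfl fun i _ => by ring
    have inner : ∑ i ∈ range (m+1),
        ((m.choose i : ℚ) * ((-1)^(q+(i+1)) * (p.choose q : ℚ) * (x+(q:ℚ))^(i+1))
          + (m.choose i : ℚ) * (x * ((-1)^(q+i) * (p.choose q : ℚ) * (x+(q:ℚ))^i)))
        = (-1)^q * (p.choose q : ℚ) * (-(q:ℚ)) *
            ∑ i ∈ range (m+1), (m.choose i : ℚ) * (-(x+(q:ℚ)))^i := by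
      rw [mul_sum]
      exact sum_congr rfl fun i _ => by rw [neg_pow (x+(q:ℚ)) i]; ring
    rw [inner, binexp, show (1 - (x+(q:ℚ))) = -((x-1)+(q:ℚ)) by ring, neg_pow ((x-1)+(q:ℚ)) m]
    ring
  have key2 : ((p:ℚ)+1) * gq x m p + gq x (m+1) p + (x-1) * gq x m p
      = ∑ q ∈ range (p+1), (-1)^(q+m) * (p.choose q : ℚ) * ((p:ℚ)-q) * (x+q)^m := by
    simp only [gq, mul_sum, ← sum_add_distrib]
    exact sum_congr rfl fun q _ => by ring
  rw [S1]
  linear_combination key2 + key_reindex x m p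

noncomputable def Aq (n p : ℕ) : ℚ := ∏ i ∈ range n, ((p : ℚ) + 1 + i)

lemma Aq_succ_mul (n p : ℕ) : ((p:ℚ)+1) * Aq n (p+1) = Aq n p * ((p:ℚ)+1+n) := by
  induction n with
  | zero => simp [Aq]
  | succ n ih =>
    simp only [Aq, prod_range_succ] at ih ⊢
    push_cast at ih ⊢
    linear_combination ((p:ℚ)+2+n) * ih

noncomputable def Tb (n M l m : ℕ) : ℚ :=
  ∑ p ∈ range M, Aq n p * ((p:ℚ)+1)^l * gq n m p

noncomputable def Tq (n l m : ℕ) : ℚ := Tb n (m+1) l m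

lemma Tb_eq {m M : ℕ} (n l : ℕ) (h : m+1 ≤ M) : Tb n M l m = Tq n l m := by
  unfold Tq Tb
  refine (sum_subset (range_subset_range.mpr h) fun p _ hp => ?_).symm
  rw [gq_zero m n p (by simpa using hp), mul_zero]

lemma T_step_m (n l m : ℕ) :
    Tq n l (m+1) =
      (∑ i ∈ range (l+1), (l.choose i : ℚ) * (Tq n (i+1) m + (n:ℚ) * Tq n i m))
      - Tq n (l+1) m - ((n:ℚ)-1) * Tq n l m := by
  have e1 : Tq n l (m+1)
      = (∑ p ∈ range (m+1), Aq n (p+1) * (((p:ℚ)+1)+1)^l *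
          ((((p:ℚ)+1) * gq n m p) - (((n:ℚ) + (((p:ℚ))+1)) * gq n m (p+1))))
        + Aq n 0 * (-(n:ℚ) * gq n m 0) := by
    show ∑ p ∈ range (m+2), Aq n p * ((p:ℚ)+1)^l * gq n (m+1) p = _
    rw [Finset.sum_range_succ' (fun p => Aq n p * ((p:ℚ)+1)^l * gq n (m+1) p) (m+1)]
    congr 1
    · apply sum_congr rfl
      intro p _
      rw [gq_I1 (n:ℚ) m p]
      push_cast
      ring
    · rw [gq_I1_zero]
      push_cast
      ring
  have e2 : ∑ p ∈ range (m+1), Aq n (p+1) * (((p:ℚ)+1)+1)^l *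
          ((((p:ℚ)+1) * gq n m p) - (((n:ℚ) + (((p:ℚ))+1)) * gq n m (p+1)))
      = (∑ p ∈ range (m+1), Aq n p * (((p:ℚ)+1+(n:ℚ)) * ((p:ℚ)+2)^l) * gq n m p)
        - ∑ p ∈ range (m+1), Aq n (p+1) * ((p:ℚ)+2)^l * ((n:ℚ)+((p:ℚ)+1)) * gq n m (p+1) := by
    rw [← sum_sub_distrib]
    apply sum_congr rfl
    intro p _
    linear_combination (((p:ℚ)+2)^l * gq n m p) * Aq_succ_mul n p
  have e3 : ∑ p ∈ range (m+1), Aq n (p+1) * ((p:ℚ)+2)^l * ((n:ℚ)+((p:ℚ)+1)) * gq n m (p+1)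
      = (∑ p ∈ range (m+1), Aq n p * ((p:ℚ)+1)^l * ((n:ℚ)+p) * gq n m p)
        - Aq n 0 * (n:ℚ) * gq n m 0 := by
    have h1 := Finset.sum_range_succ' (fun p => Aq n p * ((p:ℚ)+1)^l * ((n:ℚ)+p) * gq n m p) (m+1)
    have h2 := Finset.sum_range_succ (fun p => Aq n p * ((p:ℚ)+1)^l * ((n:ℚ)+p) * gq n m p) (m+1)
    have z : Aq n (m+1) * (((m+1:ℕ):ℚ)+1)^l * ((n:ℚ)+((m+1:ℕ):ℚ)) * gq n m (m+1) = 0 := by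
      rw [gq_zero m n (m+1) (by omega)]
      ring
    have e3' : ∑ p ∈ range (m+1), Aq n (p+1) * (((p+1:ℕ):ℚ)+1)^l * ((n:ℚ)+((p+1:ℕ):ℚ)) * gq n m (p+1)
        = (∑ p ∈ range (m+1), Aq n p * ((p:ℚ)+1)^l * ((n:ℚ)+p) * gq n m p)
          - Aq n 0 * ((0:ℚ)+1)^l * ((n:ℚ)+(0:ℚ)) * gq n m 0 := by
      rw [eq_sub_iff_add_eq]
      rw [show (Aq n 0 * ((0:ℚ)+1)^l * ((n:ℚ)+(0:ℚ)) * gq n m 0)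
          = (fun p => Aq n p * ((p:ℚ)+1)^l * ((n:ℚ)+(p:ℚ)) * gq n m p) 0 by push_cast; ring]
      rw [← h1, h2, z, add_zero]
    calc ∑ p ∈ range (m+1), Aq n (p+1) * ((p:ℚ)+2)^l * ((n:ℚ)+((p:ℚ)+1)) * gq n m (p+1)
        = ∑ p ∈ range (m+1), Aq n (p+1) * (((p+1:ℕ):ℚ)+1)^l * ((n:ℚ)+((p+1:ℕ):ℚ)) * gq n m (p+1) := by
          apply sum_congr rfl
          intro p _
          push_cast
          ring
      _ = _ := by
          rw [e3']
          push_cast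
          ring
  have e5 : ∑ p ∈ range (m+1), Aq n p * ((p:ℚ)+1)^l * ((n:ℚ)+p) * gq n m p
      = Tq n (l+1) m + ((n:ℚ)-1) * Tq n l m := by
    unfold Tq Tb
    rw [mul_sum, ← sum_add_distrib]
    apply sum_congr rfl
    intro p _
    rw [pow_succ ((p:ℚ)+1) l]
    ring
  have e6 : ∑ p ∈ range (m+1), Aq n p * (((p:ℚ)+1+(n:ℚ)) * ((p:ℚ)+2)^l) * gq n m p
      = ∑ i ∈ range (l+1), (l.choose i : ℚ) * (Tq n (i+1) m + (n:ℚ) * Tq n i m) := by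
    have binp : ∀ p : ℕ, (((p:ℚ)+2))^l = ∑ i ∈ range (l+1), ((p:ℚ)+1)^i * (l.choose i : ℚ) := by
      intro p
      have h := add_pow ((p:ℚ)+1) 1 l
      simp only [one_pow, mul_one] at h
      rw [show ((p:ℚ)+1+1) = (p:ℚ)+2 by ring] at h
      exact h
    calc ∑ p ∈ range (m+1), Aq n p * (((p:ℚ)+1+(n:ℚ)) * ((p:ℚ)+2)^l) * gq n m p
        = ∑ p ∈ range (m+1), ∑ i ∈ range (l+1),
            (l.choose i : ℚ) * (Aq n p * ((p:ℚ)+1)^(i+1) * gq n m p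
              + (n:ℚ) * (Aq n p * ((p:ℚ)+1)^i * gq n m p)) := by
          apply sum_congr rfl
          intro p _
          rw [binp p, mul_sum, mul_sum, sum_mul]
          apply sum_congr rfl
          intro i _
          rw [pow_succ ((p:ℚ)+1) i]
          ring
      _ = _ := by
          rw [Finset.sum_comm]
          refine sum_congr rfl fun i _ => ?_
          simp only [Tq, Tb, mul_add, mul_sum]
          rw [← sum_add_distrib]
  rw [e1, e2, e3, e5, e6]
  ring

lemma T_step_l (n l m : ℕ) :
    Tq n (l+1) m =
      (∑ i ∈ range (m+1), (m.choose i : ℚ) * (Tq n l (i+1) + (n:ℚ) * Tq n l i))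
      - Tq n l (m+1) - ((n:ℚ)-1) * Tq n l m := by
  have big : Tb n (m+2) (l+1) m
      = (∑ i ∈ range (m+1), (m.choose i : ℚ) * (Tb n (m+2) l (i+1) + (n:ℚ) * Tb n (m+2) l i))
        - Tb n (m+2) l (m+1) - ((n:ℚ)-1) * Tb n (m+2) l m := by
    unfold Tb
    have lhs : ∑ p ∈ range (m+2), Aq n p * ((p:ℚ)+1)^(l+1) * gq n m p
        = ∑ p ∈ range (m+2), Aq n p * ((p:ℚ)+1)^l *
            ((∑ i ∈ range (m+1), (m.choose i : ℚ) * (gq n (i+1) p + (n:ℚ) * gq n i p))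
              - gq n (m+1) p - ((n:ℚ)-1) * gq n m p) := by
      apply sum_congr rfl
      intro p _
      rw [← gq_I2 (n:ℚ) m p, pow_succ ((p:ℚ)+1) l]
      ring
    rw [lhs]
    have expand : ∀ p ∈ range (m+2), Aq n p * ((p:ℚ)+1)^l *
            ((∑ i ∈ range (m+1), (m.choose i : ℚ) * (gq n (i+1) p + (n:ℚ) * gq n i p))
              - gq n (m+1) p - ((n:ℚ)-1) * gq n m p)
        = (∑ i ∈ range (m+1), (m.choose i : ℚ) *
            (Aq n p * ((p:ℚ)+1)^l * gq n (i+1) p + (n:ℚ) * (Aq n p * ((p:ℚ)+1)^l * gq n i p)))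
          - Aq n p * ((p:ℚ)+1)^l * gq n (m+1) p
          - ((n:ℚ)-1) * (Aq n p * ((p:ℚ)+1)^l * gq n m p) := by
      intro p _
      rw [mul_sub, mul_sub, mul_sum]
      congr 1
      · congr 1
        exact sum_congr rfl fun i _ => by ring
      · ring
    rw [sum_congr rfl expand, sum_sub_distrib, sum_sub_distrib, ← mul_sum, Finset.sum_comm]
    congr 2
    refine sum_congr rfl fun i _ => ?_
    simp only [mul_add, mul_sum, sum_add_distrib]
  rw [Tb_eq n (l+1) (by omega), Tb_eq n l (by omega), Tb_eq n l (by omega)] at big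
  rw [big]
  congr 2
  apply sum_congr rfl
  intro i hi
  have hi' : i ≤ m := Nat.lt_succ_iff.mp (mem_range.mp hi)
  rw [Tb_eq n l (by omega), Tb_eq n l (by omega)]

lemma Tq_base (n l : ℕ) : Tq n l 0 = Aq n 0 := by
  show ∑ p ∈ range 1, Aq n p * ((p:ℚ)+1)^l * gq n 0 p = Aq n 0
  rw [sum_range_one]
  have h1 : gq (n:ℚ) 0 0 = 1 := by simp [gq]
  rw [h1]
  norm_num

lemma Tq_zero_left (n m : ℕ) : Tq n 0 m = Aq n 0 := by
  induction m with
  | zero => exact Tq_base n 0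
  | succ m ih =>
    rw [T_step_m n 0 m, sum_range_one, ih]
    norm_num
    ring

lemma Tq_symm (n : ℕ) : ∀ l m, Tq n l m = Tq n m l := by
  intro l
  induction l with
  | zero =>
    intro m
    rw [Tq_zero_left, Tq_base]
  | succ l ih =>
    intro m
    rw [T_step_l n l m, T_step_m n m l, ih (m+1), ih m]
    congr 1
    congr 1
    apply sum_congr rfl
    intro i _
    rw [ih (i+1), ih i]

lemma oneSub_pow_coeff_zero {j p : ℕ} (h : j < p) :
    coeff j ((1 - expNegQ) ^ p) = 0 := by
  have h0 : constantCoeff (1 - expNegQ) = 0 := by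
    simp only [map_sub, map_one, expNegQ, expQ]
    rw [← coeff_zero_eq_constantCoeff_apply, coeff_rescale, pow_zero, one_mul,
      coeff_zero_eq_constantCoeff_apply, constantCoeff_exp]
    ring
  have hdvd : (X : PowerSeries ℚ) ^ p ∣ (1 - expNegQ) ^ p :=
    pow_dvd_pow_of_dvd (X_dvd_iff.mpr h0) p
  exact X_pow_dvd_iff.mp hdvd j h

lemma coeff_mul_oneSub_pow (x : ℚ) (p m : ℕ) :
    coeff m (rescale (-x) expQ * (1 - expNegQ) ^ p)
      = ∑ q ∈ range (p+1), (-1)^q * (p.choose q : ℚ) * (-(x+(q:ℚ)))^m * (1 / m.factorial) := by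
  have hpow : (1 - expNegQ) ^ p
      = ∑ q ∈ range (p+1), ((p.choose q : ℕ) : PowerSeries ℚ) * ((-1)^q * rescale (-(q:ℚ)) expQ) := by
    have h1 : (1 : PowerSeries ℚ) - expNegQ = (-expNegQ) + 1 := by ring
    rw [h1, add_pow]
    apply sum_congr rfl
    intro q hq
    have hE : expNegQ ^ q = rescale (-(q:ℚ)) expQ := by
      rw [expNegQ, ← map_pow, expQ, exp_pow_eq_rescale_exp, rescale_rescale]
      norm_num
    rw [neg_pow expNegQ q, one_pow, hE]
    ring
  rw [hpow, mul_sum, map_sum]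
  apply sum_congr rfl
  intro q hq
  rw [show rescale (-x) expQ * (((p.choose q : ℕ) : PowerSeries ℚ) * ((-1)^q * rescale (-(q:ℚ)) expQ))
      = ((p.choose q : ℕ) : PowerSeries ℚ) * ((-1)^q * (rescale (-x) expQ * rescale (-(q:ℚ)) expQ)) by ring]
  rw [expQ, exp_mul_exp_eq_exp_add]
  rw [← nsmul_eq_mul, map_nsmul]
  have hC : ((-1 : PowerSeries ℚ))^q = C ((-1 : ℚ)^q) := by
    rw [map_pow, map_neg, map_one]
  rw [show ((-1 : PowerSeries ℚ)^q * rescale (-x + -(q:ℚ)) (exp ℚ))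
      = ((-1 : ℚ)^q) • (rescale (-x + -(q:ℚ)) (exp ℚ)) by
    rw [smul_eq_C_mul, hC]]
  rw [map_smul, coeff_rescale, coeff_exp, nsmul_eq_mul, smul_eq_mul]
  have : algebraMap ℚ ℚ (1 / m.factorial) = 1 / (m.factorial : ℚ) := by
    simp
  rw [this]
  push_cast
  ring

lemma coeff_mul_liEGF (F : PowerSeries ℚ) (k : ℤ) (m : ℕ) :
    coeff m (F * liEGF k)
      = ∑ p ∈ range (m+1), ((p:ℚ)+1)^(-k) * coeff m (F * (1 - expNegQ)^p) := by
  rw [coeff_mul]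
  have step : ∀ ij ∈ Finset.HasAntidiagonal.antidiagonal m, coeff ij.1 F * coeff ij.2 (liEGF k)
      = ∑ p ∈ range (m+1), ((p:ℚ)+1)^(-k) * (coeff ij.1 F * coeff ij.2 ((1-expNegQ)^p)) := by
    intro ij hij
    have h2 : ij.2 ≤ m := by
      have := Finset.HasAntidiagonal.mem_antidiagonal.mp hij
      omega
    rw [liEGF, coeff_mk]
    rw [← sum_subset (range_subset_range.mpr (by omega : ij.2 + 1 ≤ m+1)) (fun p _ hp => by
      rw [oneSub_pow_coeff_zero (show ij.2 < p by simpa using hp)]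
      simp)]
    rw [mul_sum]
    exact sum_congr rfl fun p _ => by ring
  rw [sum_congr rfl step, Finset.sum_comm]
  exact sum_congr rfl fun p _ => by rw [← mul_sum, ← coeff_mul]

lemma pbPoly_explicit (k : ℤ) (x : ℚ) (m : ℕ) :
    pbPoly k x m = ∑ p ∈ range (m+1), ((p:ℚ)+1)^(-k) *
      ∑ q ∈ range (p+1), (-1)^q * (p.choose q : ℚ) * (-(x+(q:ℚ)))^m := by
  have hm : (m.factorial : ℚ) ≠ 0 := Nat.cast_ne_zero.mpr m.factorial_ne_zero
  rw [pbPoly, pbEGF, coeff_mul_liEGF, mul_sum]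
  apply sum_congr rfl
  intro p _
  rw [coeff_mul_oneSub_pow, ← sum_mul]
  field_simp

lemma stirling1_zero : ∀ n j : ℕ, n < j → stirling1 n j = 0 := by
  intro n
  induction n with
  | zero =>
    intro j hj
    obtain ⟨j', rfl⟩ : ∃ j', j = j' + 1 := ⟨j - 1, by omega⟩
    rfl
  | succ n ih =>
    intro j hj
    obtain ⟨j', rfl⟩ : ∃ j', j = j' + 1 := ⟨j - 1, by omega⟩
    show stirling1 n j' + n * stirling1 n (j' + 1) = 0
    rw [ih j' (by omega), ih (j'+1) (by omega)]
    simp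

lemma stirling1_sum (n : ℕ) (y : ℚ) :
    ∑ j ∈ range (n+1), (stirling1 n j : ℚ) * y^j = ∏ i ∈ range n, (y + i) := by
  induction n with
  | zero => simp [stirling1]
  | succ n ih =>
    rw [Finset.sum_range_succ' (fun j => (stirling1 (n+1) j : ℚ) * y^j) (n+1)]
    have h0 : stirling1 (n+1) 0 = 0 := rfl
    rw [h0]
    have hrec : ∀ j ∈ range (n+1), (stirling1 (n+1) (j+1) : ℚ) * y^(j+1)
        = y * ((stirling1 n j : ℚ) * y^j) + (n:ℚ) * ((stirling1 n (j+1) : ℚ) * y^(j+1)) := by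
      intro j _
      show ((stirling1 n j + n * stirling1 n (j+1) : ℕ) : ℚ) * y^(j+1) = _
      push_cast
      rw [pow_succ]
      ring
    rw [sum_congr rfl hrec, sum_add_distrib, ← mul_sum, ← mul_sum, ih]
    have hshift : ∑ j ∈ range (n+1), (stirling1 n (j+1) : ℚ) * y^(j+1)
        = (∏ i ∈ range n, (y + i)) - (stirling1 n 0 : ℚ) := by
      have h1 := Finset.sum_range_succ' (fun j => (stirling1 n j : ℚ) * y^j) (n+1)
      have h2 := Finset.sum_range_succ (fun j => (stirling1 n j : ℚ) * y^j) (n+1)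
      rw [h2, ih, stirling1_zero n (n+1) (by omega)] at h1
      simp only [Nat.cast_zero, zero_mul, add_zero, pow_zero, mul_one] at h1
      rw [eq_sub_iff_add_eq, h1]
    rw [hshift]
    have hn0 : (n:ℚ) * (stirling1 n 0 : ℚ) = 0 := by
      cases n with
      | zero => simp
      | succ n =>
        rw [show stirling1 (n+1) 0 = 0 from rfl]
        simp
    rw [prod_range_succ]
    push_cast
    ring_nf
    ring_nf at hn0
    linarith [hn0]

lemma scrB_eq_Tq (n a b : ℕ) :
    ∑ j ∈ range (n + 1), (stirling1 n j : ℚ) * pbPoly (-(a : ℤ) - j) n b = Tq n a b := by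
  have hinner : ∀ p : ℕ, ∑ q ∈ range (p+1), (-1)^q * (p.choose q : ℚ) * (-((n:ℚ)+(q:ℚ)))^b
      = gq (n:ℚ) b p := by
    intro p
    apply sum_congr rfl
    intro q _
    rw [neg_pow ((n:ℚ)+(q:ℚ)) b, pow_add]
    ring
  have hj : ∀ j ∈ range (n+1), (stirling1 n j : ℚ) * pbPoly (-(a : ℤ) - j) n b
      = ∑ p ∈ range (b+1), (stirling1 n j : ℚ) * ((p:ℚ)+1)^j * (((p:ℚ)+1)^a * gq (n:ℚ) b p) := by
    intro j _
    rw [pbPoly_explicit, mul_sum]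
    apply sum_congr rfl
    intro p _
    rw [hinner p]
    rw [show -(-(a : ℤ) - (j:ℕ)) = ((a + j : ℕ) : ℤ) by push_cast; ring, zpow_natCast, pow_add]
    ring
  rw [sum_congr rfl hj, Finset.sum_comm]
  show ∑ p ∈ range (b+1), _ = ∑ p ∈ range (b+1), Aq n p * ((p:ℚ)+1)^a * gq (n:ℚ) b p
  apply sum_congr rfl
  intro p _
  rw [← sum_mul, stirling1_sum n ((p:ℚ)+1)]
  rw [show (∏ i ∈ range n, ((p:ℚ)+1+(i:ℚ))) = Aq n p from rfl]
  ring

/-- One-parameter generalization of the poly-Bernoulli duality. -/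
theorem scrB_duality (l m n : ℕ) :
    ∑ j ∈ range (n + 1), (stirling1 n j : ℚ) * pbPoly (-(l : ℤ) - j) n m =
    ∑ j ∈ range (n + 1), (stirling1 n j : ℚ) * pbPoly (-(m : ℤ) - j) n l := by
  rw [scrB_eq_Tq n l m, scrB_eq_Tq n m l, Tq_symm n l m]
end
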